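/- For any finite B ⊂ Z^d and any x ≠ x' in B, one has G_B(x,x) · G_{B∖{x}}(x',x') = G_B(x',x') · G_{B∖{x'}}(x,x). -/

import Mathlib

def adj {d : ℕ} (x y : Fin d → ℤ) : Prop := (∑ i : Fin d, |x i - y i|) = 1

instance {d : ℕ} (x y : Fin d → ℤ) : Decidable (adj x y) := by unfold adj; infer_instance

noncomputable def killedKernel {d : ℕ} (B : Finset (Fin d → ℤ)) : Matrix B B ℝ :=
  fun x y => if adj (x : Fin d → ℤ) (y : Fin d → ℤ) then 1 / (2 * (d : ℝ)) else 0

/-- The Green's function `G_B(x,y) = E_x[∑_{k<τ_B} 1{X_k=y}] = ∑_k (P_B)^k(x,y)` of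
simple random walk on `ℤ^d` killed upon exiting the finite set `B`, extended by `0`
outside `B`. -/
noncomputable def green {d : ℕ} (B : Finset (Fin d → ℤ)) (x y : Fin d → ℤ) : ℝ :=
  if hx : x ∈ B then (if hy : y ∈ B then
    ∑' k : ℕ, ((killedKernel B) ^ k) ⟨x, hx⟩ ⟨y, hy⟩ else 0) else 0

namespace GreenAux

variable {d : ℕ}

noncomputable def K (x y : Fin d → ℤ) : ℝ := if adj x y then 1 / (2 * (d : ℝ)) else 0

lemma killedKernel_apply (B : Finset (Fin d → ℤ)) (i j : B) :
    killedKernel B i j = K i.1 j.1 := rfl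

lemma K_nonneg (x y : Fin d → ℤ) : 0 ≤ K x y := by
  unfold K; positivity

lemma adj_symm {x y : Fin d → ℤ} (h : adj x y) : adj y x := by
  unfold adj at *; simpa [abs_sub_comm] using h

lemma K_symm (x y : Fin d → ℤ) : K x y = K y x := by
  unfold K
  by_cases h : adj x y
  · rw [if_pos h, if_pos (adj_symm h)]
  · rw [if_neg h, if_neg (fun h' => h (adj_symm h'))]

/-- the neighbor map -/
def ψ (i : Fin d → ℤ) (p : Fin d × Bool) : Fin d → ℤ :=
  Function.update i p.1 (i p.1 + if p.2 then 1 else -1)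

lemma adj_elim {i j : Fin d → ℤ} (h : adj i j) : ∃ p : Fin d × Bool, j = ψ i p := by
  unfold adj at h
  -- find the coordinate where they differ
  have hex : ∃ c : Fin d, |i c - j c| ≠ 0 := by
    by_contra hc
    push_neg at hc
    rw [Finset.sum_eq_zero (fun c _ => hc c)] at h
    exact one_ne_zero h.symm
  obtain ⟨c, hc⟩ := hex
  have h1 : 1 ≤ |i c - j c| := by
    have := abs_nonneg (i c - j c); omega
  have key : ∑ c' ∈ Finset.univ.erase c, |i c' - j c'| + |i c - j c| = 1 := by
    rw [Finset.sum_erase_add _ _ (Finset.mem_univ c)]; exact h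
  have hnn : 0 ≤ ∑ c' ∈ Finset.univ.erase c, |i c' - j c'| :=
    Finset.sum_nonneg (fun c' _ => abs_nonneg _)
  have hothers : ∑ c' ∈ Finset.univ.erase c, |i c' - j c'| = 0 := by linarith
  have habs : |i c - j c| = 1 := by linarith
  have hco : ∀ c' : Fin d, c' ≠ c → j c' = i c' := by
    intro c' hc'
    have hz := (Finset.sum_eq_zero_iff_of_nonneg (fun c'' _ => abs_nonneg _)).1 hothers c'
      (Finset.mem_erase.2 ⟨hc', Finset.mem_univ _⟩)
    have := abs_eq_zero.1 hz; omega
  rcases abs_eq (by norm_num : (0:ℤ) ≤ 1) |>.1 habs with h' | h'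
  · exact ⟨(c, false), funext fun c' => by
      by_cases hcc : c' = c
      · subst hcc; simp [ψ, Function.update_self]; omega
      · simp [ψ, Function.update_of_ne hcc, hco c' hcc]⟩
  · exact ⟨(c, true), funext fun c' => by
      by_cases hcc : c' = c
      · subst hcc; simp [ψ, Function.update_self]; omega
      · simp [ψ, Function.update_of_ne hcc, hco c' hcc]⟩

lemma adj_psi_true (i : Fin d → ℤ) (c : Fin d) : adj i (ψ i (c, true)) := by
  unfold adj ψ
  rw [Finset.sum_eq_single c]
  · simp [Function.update_self]
  · intro c' _ hc'; simp [Function.update_of_ne hc']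
  · intro h; exact absurd (Finset.mem_univ c) h

lemma card_adj_le (i : Fin d → ℤ) (B : Finset (Fin d → ℤ)) :
    (B.filter (fun j => adj i j)).card ≤ 2 * d := by
  have hsub : B.filter (fun j => adj i j) ⊆ Finset.univ.image (ψ i) := by
    intro j hj
    obtain ⟨p, hp⟩ := adj_elim (Finset.mem_filter.1 hj).2
    exact Finset.mem_image.2 ⟨p, Finset.mem_univ _, hp.symm⟩
  calc (B.filter (fun j => adj i j)).card ≤ (Finset.univ.image (ψ i)).card :=
        Finset.card_le_card hsub
    _ ≤ (Finset.univ : Finset (Fin d × Bool)).card := Finset.card_image_le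
    _ = 2 * d := by simp [Fintype.card_prod, mul_comm]

lemma card_adj_le' (i : Fin d → ℤ) (B : Finset (Fin d → ℤ)) {p : Fin d × Bool}
    (hp : ψ i p ∉ B) : (B.filter (fun j => adj i j)).card ≤ 2 * d - 1 := by
  have hsub : B.filter (fun j => adj i j) ⊆ (Finset.univ.image (ψ i)).erase (ψ i p) := by
    intro j hj
    obtain ⟨q, hq⟩ := adj_elim (Finset.mem_filter.1 hj).2
    refine Finset.mem_erase.2 ⟨?_, Finset.mem_image.2 ⟨q, Finset.mem_univ _, hq.symm⟩⟩
    rintro rfl; exact hp (Finset.mem_filter.1 hj).1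
  have h1 : ((Finset.univ.image (ψ i)).erase (ψ i p)).card ≤
      (Finset.univ.image (ψ i)).card - 1 := by
    rw [Finset.card_erase_of_mem (Finset.mem_image.2 ⟨p, Finset.mem_univ _, rfl⟩)]
  calc (B.filter (fun j => adj i j)).card ≤ _ := Finset.card_le_card hsub
    _ ≤ (Finset.univ.image (ψ i)).card - 1 := h1
    _ ≤ (Finset.univ : Finset (Fin d × Bool)).card - 1 := by
        have := Finset.card_image_le (f := ψ i) (s := (Finset.univ : Finset (Fin d × Bool)))
        omega
    _ ≤ 2 * d - 1 := by simp [Fintype.card_prod]; omega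

lemma sum_K_eq (i : Fin d → ℤ) (B : Finset (Fin d → ℤ)) :
    ∑ j ∈ B, K i j = (B.filter (fun j => adj i j)).card * (1 / (2 * (d:ℝ))) := by
  simp only [K]
  rw [← Finset.sum_filter, Finset.sum_const, nsmul_eq_mul]


variable (B : Finset (Fin d → ℤ))

lemma kernel_nonneg (i j : B) : 0 ≤ killedKernel B i j := K_nonneg _ _

lemma pow_entry_nonneg (k : ℕ) (i j : B) : 0 ≤ ((killedKernel B) ^ k) i j := by
  induction k generalizing i j with
  | zero =>
    rw [pow_zero, Matrix.one_apply]
    split <;> norm_num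
  | succ k ih =>
    rw [pow_succ, Matrix.mul_apply]
    exact Finset.sum_nonneg fun w _ => mul_nonneg (ih i w) (kernel_nonneg B w j)

/-- survival mass after k steps -/
noncomputable def s (k : ℕ) (i : B) : ℝ := ∑ j : B, ((killedKernel B) ^ k) i j

lemma s_nonneg (k : ℕ) (i : B) : 0 ≤ s B k i :=
  Finset.sum_nonneg fun j _ => pow_entry_nonneg B k i j

lemma s_zero (i : B) : s B 0 i = 1 := by
  unfold s
  simp [pow_zero, Matrix.one_apply]

lemma s_add (a b : ℕ) (i : B) :
    s B (a + b) i = ∑ w : B, ((killedKernel B) ^ a) i w * s B b w := by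
  unfold s
  rw [pow_add]
  simp only [Matrix.mul_apply]
  rw [Finset.sum_comm]
  exact Finset.sum_congr rfl fun w _ => (Finset.mul_sum _ _ _).symm

lemma s_succ (k : ℕ) (i : B) :
    s B (k + 1) i = ∑ w : B, killedKernel B i w * s B k w := by
  have := s_add B 1 k i
  rw [add_comm 1 k] at this
  simpa [pow_one] using this

lemma s_one_eq (i : B) :
    s B 1 i = (B.filter (fun j => adj (i : Fin d → ℤ) j)).card * (1 / (2 * (d:ℝ))) := by
  unfold s
  simp only [pow_one]
  have : ∑ j : B, killedKernel B i j = ∑ j ∈ B, K (i : Fin d → ℤ) j :=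
    Finset.sum_coe_sort B (fun j => K (i : Fin d → ℤ) j)
  rw [this, sum_K_eq]

lemma s_one_le (hd : 1 ≤ d) (i : B) : s B 1 i ≤ 1 := by
  rw [s_one_eq]
  have hc : ((B.filter (fun j => adj (i : Fin d → ℤ) j)).card : ℝ) ≤ 2 * d := by
    exact_mod_cast Nat.cast_le.2 (card_adj_le (i : Fin d → ℤ) B)
  have hd' : (0:ℝ) < 2 * d := by
    have : (1:ℝ) ≤ d := by exact_mod_cast hd
    linarith
  rw [mul_one_div, div_le_one hd']
  exact hc

lemma s_mono (hd : 1 ≤ d) (k : ℕ) (i : B) : s B (k + 1) i ≤ s B k i := by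
  induction k generalizing i with
  | zero => rw [s_zero]; exact s_one_le B hd i
  | succ k ih =>
    rw [s_succ, s_succ]
    exact Finset.sum_le_sum fun w _ =>
      mul_le_mul_of_nonneg_left (ih w) (kernel_nonneg B i w)

lemma s_anti (hd : 1 ≤ d) {k n : ℕ} (h : k ≤ n) (i : B) : s B n i ≤ s B k i := by
  induction n with
  | zero => rw [Nat.le_zero.1 h]
  | succ n ih =>
    rcases Nat.lt_or_ge k (n+1) with h' | h'
    · exact le_trans (s_mono B hd n i) (ih (Nat.lt_succ_iff.1 h'))
    · rw [le_antisymm h h']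

lemma s_le_one (hd : 1 ≤ d) (k : ℕ) (i : B) : s B k i ≤ 1 := by
  have := s_anti B hd (Nat.zero_le k) i
  rwa [s_zero] at this

lemma escape (hd : 1 ≤ d) (m : ℤ) (hm : ∀ y ∈ B, y (⟨0, hd⟩ : Fin d) ≤ m) :
    ∀ n : ℕ, ∀ i : B, ((m + 1 - (i : Fin d → ℤ) ⟨0, hd⟩).toNat ≤ n) →
      s B n i ≤ 1 - (1 / (2 * (d:ℝ))) ^ n := by
  have hd' : (0:ℝ) < 2 * d := by
    have : (1:ℝ) ≤ d := by exact_mod_cast hd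
    linarith
  have hq0 : 0 < 1 / (2 * (d:ℝ)) := by positivity
  have hq1 : 1 / (2 * (d:ℝ)) ≤ 1 := by
    rw [div_le_one hd']
    have : (1:ℝ) ≤ d := by exact_mod_cast hd
    linarith
  intro n
  induction n with
  | zero =>
    intro i hi
    exfalso
    have := hm (i : Fin d → ℤ) i.2
    omega
  | succ n ih =>
    intro i hi
    set c0 : Fin d := ⟨0, hd⟩
    set i' : Fin d → ℤ := ψ (i : Fin d → ℤ) (c0, true) with hi'def
    have hadj : adj (i : Fin d → ℤ) i' := adj_psi_true (i : Fin d → ℤ) c0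
    have hi'c0 : i' c0 = (i : Fin d → ℤ) c0 + 1 := by
      simp [hi'def, ψ, Function.update_self]
    by_cases hmem : i' ∈ B
    · -- step to i' which is strictly closer to the boundary
      have hr' : (m + 1 - i' c0).toNat ≤ n := by
        have h1 := hm (i : Fin d → ℤ) i.2
        omega
      have hIH := ih ⟨i', hmem⟩ hr'
      rw [s_succ]
      have hsplit := Finset.sum_erase_add Finset.univ
        (fun w : B => killedKernel B i w * s B n w) (Finset.mem_univ (⟨i', hmem⟩ : B))
      rw [← hsplit]
      have hKii' : killedKernel B i ⟨i', hmem⟩ = 1 / (2 * (d:ℝ)) := if_pos hadj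
      have hterm : killedKernel B i ⟨i', hmem⟩ * s B n ⟨i', hmem⟩ ≤
          (1 / (2 * (d:ℝ))) * (1 - (1 / (2 * (d:ℝ))) ^ n) := by
        rw [hKii']
        exact mul_le_mul_of_nonneg_left hIH (le_of_lt hq0)
      have hrest : ∑ w ∈ Finset.univ.erase (⟨i', hmem⟩ : B),
          killedKernel B i w * s B n w ≤ s B 1 i - 1 / (2 * (d:ℝ)) := by
        have h1 : ∑ w ∈ Finset.univ.erase (⟨i', hmem⟩ : B),
            killedKernel B i w * s B n w ≤
            ∑ w ∈ Finset.univ.erase (⟨i', hmem⟩ : B), killedKernel B i w := by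
          refine Finset.sum_le_sum fun w _ => ?_
          have := s_le_one B hd n w
          have h0 := kernel_nonneg B i w
          nlinarith [s_nonneg B n w]
        have h2 : ∑ w ∈ Finset.univ.erase (⟨i', hmem⟩ : B), killedKernel B i w
            = s B 1 i - 1 / (2 * (d:ℝ)) := by
          have heq := Finset.sum_erase_add Finset.univ
            (fun w : B => killedKernel B i w) (Finset.mem_univ (⟨i', hmem⟩ : B))
          have hs1 : s B 1 i = ∑ w : B, killedKernel B i w := by
            unfold s; simp [pow_one]
          rw [hs1]
          rw [hKii'] at heq
          linarith
        linarith
      have hs1le := s_one_le B hd i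
      have : (1 / (2 * (d:ℝ))) ^ (n+1) = (1 / (2 * (d:ℝ))) * (1 / (2 * (d:ℝ))) ^ n := by
        ring
      rw [this]
      linarith
    · -- i' escapes B: survival after one step already at most 1 - 1/(2d)
      have hcard : ((B.filter (fun j => adj (i : Fin d → ℤ) j)).card : ℝ) ≤ 2 * d - 1 := by
        have h := card_adj_le' (i : Fin d → ℤ) B (p := (c0, true)) hmem
        have h2d : 1 ≤ 2 * d := by omega
        have h3 : ((B.filter (fun j => adj (i : Fin d → ℤ) j)).card : ℝ) ≤ ((2 * d - 1 : ℕ) : ℝ) :=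
          Nat.cast_le.2 h
        have h4 : (((2 * d - 1 : ℕ)) : ℝ) = 2 * (d:ℝ) - 1 := by
          rw [Nat.cast_sub h2d]; push_cast; ring
        linarith
      have hs1 : s B 1 i ≤ 1 - 1 / (2 * (d:ℝ)) := by
        rw [s_one_eq, mul_one_div]
        rw [div_le_iff₀ hd']
        have hfe : (1 - 1 / (2 * (d:ℝ))) * (2 * d) = 2 * (d:ℝ) - 1 := by
          field_simp
        rw [hfe]
        exact hcard
      have hsn : s B (n+1) i ≤ s B 1 i := s_anti B hd (by omega) i
      have hqpow : (1 / (2 * (d:ℝ))) ^ (n+1) ≤ 1 / (2 * (d:ℝ)) := by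
        have := pow_le_pow_of_le_one (le_of_lt hq0) hq1 (show 1 ≤ n+1 by omega)
        simpa using this
      linarith

lemma summable_pow_entry (hd : 1 ≤ d) (i j : B) :
    Summable fun k => ((killedKernel B) ^ k) i j := by
  classical
  have hd' : (0:ℝ) < 2 * d := by
    have : (1:ℝ) ≤ d := by exact_mod_cast hd
    linarith
  have hq0 : 0 < 1 / (2 * (d:ℝ)) := by positivity
  have hq12 : 1 / (2 * (d:ℝ)) ≤ 1/2 := by
    rw [div_le_div_iff₀ hd' (by norm_num)]
    have : (1:ℝ) ≤ d := by exact_mod_cast hd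
    linarith
  have hBne : B.Nonempty := ⟨i, i.2⟩
  set c0 : Fin d := ⟨0, hd⟩
  set m : ℤ := B.sup' hBne (fun y => y c0) with hmdef
  have hm : ∀ y ∈ B, y c0 ≤ m := fun y hy => Finset.le_sup' (fun y => y c0) hy
  clear_value m
  set r : (Fin d → ℤ) → ℕ := fun y => (m + 1 - y c0).toNat with hrdef
  set N : ℕ := B.sup r with hNdef
  have hrN : ∀ y ∈ B, r y ≤ N := fun y hy => Finset.le_sup hy
  have hN1 : 1 ≤ N := by
    refine le_trans ?_ (hrN _ i.2)
    have hle := hm (i : Fin d → ℤ) i.2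
    show 1 ≤ (m + 1 - (i : Fin d → ℤ) c0).toNat
    clear_value N
    clear hrdef hNdef hmdef
    clear_value r
    omega
  set θ : ℝ := 1 - (1 / (2 * (d:ℝ))) ^ N with hθdef
  have hθ0 : 0 < θ := by
    have h1 : (1 / (2 * (d:ℝ))) ^ N ≤ (1 / (2 * (d:ℝ))) ^ 1 :=
      pow_le_pow_of_le_one (le_of_lt hq0) (by linarith) hN1
    simp only [pow_one] at h1
    simp only [hθdef]
    linarith
  have hθ1 : θ < 1 := by
    have : 0 < (1 / (2 * (d:ℝ))) ^ N := pow_pos hq0 N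
    simp only [hθdef]; linarith
  have hsN : ∀ w : B, s B N w ≤ θ := by
    intro w
    have h1 : s B N w ≤ s B (r (w : Fin d → ℤ)) w := s_anti B hd (hrN _ w.2) w
    have h2 := escape B hd m hm (r (w : Fin d → ℤ)) w (le_refl _)
    have h3 : (1 / (2 * (d:ℝ))) ^ N ≤ (1 / (2 * (d:ℝ))) ^ (r (w : Fin d → ℤ)) :=
      pow_le_pow_of_le_one (le_of_lt hq0) (by linarith) (hrN _ w.2)
    simp only [hθdef]
    linarith
  -- geometric decay in blocks of N
  have hblock : ∀ mm : ℕ, ∀ w : B, s B (mm * N) w ≤ θ ^ mm := by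
    intro mm
    induction mm with
    | zero => intro w; simpa [s_zero] using le_refl (1:ℝ)
    | succ mm ih =>
      intro w
      have : (mm + 1) * N = N + mm * N := by ring
      rw [this, s_add]
      calc ∑ v : B, ((killedKernel B) ^ N) w v * s B (mm * N) v
          ≤ ∑ v : B, ((killedKernel B) ^ N) w v * θ ^ mm := by
            refine Finset.sum_le_sum fun v _ => ?_
            exact mul_le_mul_of_nonneg_left (ih v) (pow_entry_nonneg B N w v)
        _ = s B N w * θ ^ mm := by rw [← Finset.sum_mul]; rfl
        _ ≤ θ * θ ^ mm := by
            exact mul_le_mul_of_nonneg_right (hsN w) (pow_nonneg (le_of_lt hθ0) mm)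
        _ = θ ^ (mm + 1) := by ring
  set ρ : ℝ := θ ^ ((N:ℝ)⁻¹) with hρdef
  have hNpos : (0:ℝ) < N := by exact_mod_cast hN1
  have hρ0 : 0 ≤ ρ := Real.rpow_nonneg (le_of_lt hθ0) _
  have hρ1 : ρ < 1 := Real.rpow_lt_one (le_of_lt hθ0) hθ1 (by positivity)
  have hbound : ∀ k : ℕ, ((killedKernel B) ^ k) i j ≤ θ⁻¹ * ρ ^ k := by
    intro k
    have h1 : ((killedKernel B) ^ k) i j ≤ s B k i :=
      Finset.single_le_sum (fun v _ => pow_entry_nonneg B k i v) (Finset.mem_univ j)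
    have h2 : s B k i ≤ s B ((k / N) * N) i :=
      s_anti B hd (Nat.div_mul_le_self k N) i
    have h3 : s B ((k / N) * N) i ≤ θ ^ (k / N) := hblock (k / N) i
    have h4 : θ ^ (k / N) ≤ θ⁻¹ * ρ ^ k := by
      have hkN : (k : ℝ) * (N:ℝ)⁻¹ ≤ ((k / N : ℕ) : ℝ) + 1 := by
        have hNn : 0 < N := hN1
        have h5 : k < N * (k / N) + N := by
          clear_value N
          clear hrdef hNdef hmdef
          clear_value r
          have := Nat.div_add_mod k N
          have := Nat.mod_lt k hNn
          omega
        have h6 : (k:ℝ) < (N:ℝ) * ((k / N : ℕ) : ℝ) + N := by exact_mod_cast h5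
        have heq : (k:ℝ) * (N:ℝ)⁻¹ = (k:ℝ) / N := by ring
        rw [heq, div_le_iff₀ hNpos]
        nlinarith
      have h7 : θ ^ (((k / N : ℕ) : ℝ) + 1) ≤ θ ^ ((k:ℝ) * (N:ℝ)⁻¹) :=
        Real.rpow_le_rpow_of_exponent_ge hθ0 (le_of_lt hθ1) hkN
      have h8 : θ ^ (((k / N : ℕ) : ℝ) + 1) = θ * θ ^ (k / N) := by
        rw [Real.rpow_add hθ0, Real.rpow_one, Real.rpow_natCast]
        ring
      have h9 : θ ^ ((k:ℝ) * (N:ℝ)⁻¹) = ρ ^ k := by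
        rw [hρdef, ← Real.rpow_natCast (θ ^ ((N:ℝ)⁻¹)) k, ← Real.rpow_mul (le_of_lt hθ0)]
        congr 1
        ring
      rw [h8, h9] at h7
      calc θ ^ (k / N) = θ⁻¹ * (θ * θ ^ (k / N)) := by
            rw [← mul_assoc, inv_mul_cancel₀ (ne_of_gt hθ0), one_mul]
        _ ≤ θ⁻¹ * ρ ^ k := by
            apply mul_le_mul_of_nonneg_left h7 (by positivity)
    linarith
  exact Summable.of_nonneg_of_le (fun k => pow_entry_nonneg B k i j) hbound
    (((summable_geometric_of_lt_one hρ0 hρ1).mul_left θ⁻¹))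


noncomputable def Gmat (B : Finset (Fin d → ℤ)) : Matrix B B ℝ :=
  fun i j => ∑' k : ℕ, ((killedKernel B) ^ k) i j

lemma green_eq (B : Finset (Fin d → ℤ)) {x y : Fin d → ℤ} (hx : x ∈ B) (hy : y ∈ B) :
    green B x y = Gmat B ⟨x, hx⟩ ⟨y, hy⟩ := by
  unfold green Gmat
  rw [dif_pos hx, dif_pos hy]

lemma PmulG (hd : 1 ≤ d) (B : Finset (Fin d → ℤ)) (i j : B) :
    (killedKernel B * Gmat B) i j = ∑' k : ℕ, ((killedKernel B) ^ (k+1)) i j := by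
  rw [Matrix.mul_apply]
  calc ∑ w : B, killedKernel B i w * Gmat B w j
      = ∑ w : B, ∑' k : ℕ, killedKernel B i w * ((killedKernel B) ^ k) w j := by
        exact Finset.sum_congr rfl fun w _ => (tsum_mul_left).symm
    _ = ∑' k : ℕ, ∑ w : B, killedKernel B i w * ((killedKernel B) ^ k) w j := by
        refine (Summable.tsum_finsetSum fun w _ => ?_).symm
        exact (summable_pow_entry B hd w j).mul_left _
    _ = ∑' k : ℕ, ((killedKernel B) ^ (k+1)) i j := by
        refine tsum_congr fun k => ?_
        rw [pow_succ', Matrix.mul_apply]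

lemma GmulP (hd : 1 ≤ d) (B : Finset (Fin d → ℤ)) (i j : B) :
    (Gmat B * killedKernel B) i j = ∑' k : ℕ, ((killedKernel B) ^ (k+1)) i j := by
  rw [Matrix.mul_apply]
  calc ∑ w : B, Gmat B i w * killedKernel B w j
      = ∑ w : B, ∑' k : ℕ, ((killedKernel B) ^ k) i w * killedKernel B w j := by
        exact Finset.sum_congr rfl fun w _ => (tsum_mul_right).symm
    _ = ∑' k : ℕ, ∑ w : B, ((killedKernel B) ^ k) i w * killedKernel B w j := by
        refine (Summable.tsum_finsetSum fun w _ => ?_).symm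
        exact (summable_pow_entry B hd i w).mul_right _
    _ = ∑' k : ℕ, ((killedKernel B) ^ (k+1)) i j := by
        refine tsum_congr fun k => ?_
        rw [pow_succ, Matrix.mul_apply]

lemma oneSub_mul_G (hd : 1 ≤ d) (B : Finset (Fin d → ℤ)) (i j : B) :
    ((1 - killedKernel B) * Gmat B) i j = (1 : Matrix B B ℝ) i j := by
  rw [Matrix.sub_mul, Matrix.one_mul, Matrix.sub_apply, PmulG hd]
  have h := Summable.tsum_eq_zero_add (summable_pow_entry B hd i j)
  have h0 : ((killedKernel B) ^ 0) i j = (1 : Matrix B B ℝ) i j := by rw [pow_zero]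
  have hG : Gmat B i j = ∑' k : ℕ, ((killedKernel B) ^ k) i j := rfl
  rw [hG, h, h0]
  ring

lemma G_mul_oneSub (hd : 1 ≤ d) (B : Finset (Fin d → ℤ)) (i j : B) :
    (Gmat B * (1 - killedKernel B)) i j = (1 : Matrix B B ℝ) i j := by
  rw [Matrix.mul_sub, Matrix.mul_one, Matrix.sub_apply, GmulP hd]
  have h := Summable.tsum_eq_zero_add (summable_pow_entry B hd i j)
  have h0 : ((killedKernel B) ^ 0) i j = (1 : Matrix B B ℝ) i j := by rw [pow_zero]
  have hG : Gmat B i j = ∑' k : ℕ, ((killedKernel B) ^ k) i j := rfl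
  rw [hG, h, h0]
  ring

lemma kernel_transpose (B : Finset (Fin d → ℤ)) :
    (killedKernel B).transpose = killedKernel B := by
  ext i j
  rw [Matrix.transpose_apply]
  exact K_symm _ _

lemma Gmat_symm (B : Finset (Fin d → ℤ)) (i j : B) : Gmat B i j = Gmat B j i := by
  refine tsum_congr fun k => ?_
  have h : ((killedKernel B) ^ k).transpose = (killedKernel B) ^ k := by
    rw [Matrix.transpose_pow, kernel_transpose]
  calc ((killedKernel B) ^ k) i j = ((killedKernel B) ^ k).transpose j i := rfl
    _ = ((killedKernel B) ^ k) j i := by rw [h]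

lemma green_symm (B : Finset (Fin d → ℤ)) (x y : Fin d → ℤ) :
    green B x y = green B y x := by
  unfold green
  by_cases hx : x ∈ B <;> by_cases hy : y ∈ B <;>
    simp only [dif_pos, dif_neg, hx, hy]
  · exact Gmat_symm B ⟨x, hx⟩ ⟨y, hy⟩
  all_goals simp [hx, hy]

lemma mulGreen_ambient (hd : 1 ≤ d) (B : Finset (Fin d → ℤ)) {y z : Fin d → ℤ}
    (hy : y ∈ B) (hz : z ∈ B) :
    ∑ w ∈ B, ((if y = w then (1:ℝ) else 0) - K y w) * green B w z
      = (if y = z then (1:ℝ) else 0) := by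
  have hsum : ∑ w ∈ B, ((if y = w then (1:ℝ) else 0) - K y w) * green B w z
      = ∑ w : B, ((if y = (w : Fin d → ℤ) then (1:ℝ) else 0) - K y w) * green B (w : Fin d → ℤ) z :=
    (Finset.sum_coe_sort B _).symm
  rw [hsum]
  have hstep : ∀ w : B, ((if y = (w : Fin d → ℤ) then (1:ℝ) else 0) - K y w) * green B (w : Fin d → ℤ) z
      = ((1 : Matrix B B ℝ) - killedKernel B) ⟨y, hy⟩ w * Gmat B w ⟨z, hz⟩ := by
    intro w
    rw [green_eq B w.2 hz, Matrix.sub_apply, Matrix.one_apply]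
    congr 2
    simp [Subtype.ext_iff]
  rw [Finset.sum_congr rfl (fun w _ => hstep w), ← Matrix.mul_apply, oneSub_mul_G hd,
    Matrix.one_apply]
  simp [Subtype.ext_iff]

lemma greenMul_ambient (hd : 1 ≤ d) (B : Finset (Fin d → ℤ)) {y z : Fin d → ℤ}
    (hy : y ∈ B) (hz : z ∈ B) :
    ∑ w ∈ B, green B y w * ((if w = z then (1:ℝ) else 0) - K w z)
      = (if y = z then (1:ℝ) else 0) := by
  have hsum : ∑ w ∈ B, green B y w * ((if w = z then (1:ℝ) else 0) - K w z)
      = ∑ w : B, green B y (w : Fin d → ℤ) * ((if (w : Fin d → ℤ) = z then (1:ℝ) else 0) - K w z) :=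
    (Finset.sum_coe_sort B _).symm
  rw [hsum]
  have hstep : ∀ w : B, green B y (w : Fin d → ℤ) * ((if (w : Fin d → ℤ) = z then (1:ℝ) else 0) - K w z)
      = Gmat B ⟨y, hy⟩ w * ((1 : Matrix B B ℝ) - killedKernel B) w ⟨z, hz⟩ := by
    intro w
    rw [green_eq B hy w.2, Matrix.sub_apply, Matrix.one_apply]
    congr 2
    simp [Subtype.ext_iff]
  rw [Finset.sum_congr rfl (fun w _ => hstep w), ← Matrix.mul_apply, G_mul_oneSub hd,
    Matrix.one_apply]
  simp [Subtype.ext_iff]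

lemma one_le_green (hd : 1 ≤ d) (B : Finset (Fin d → ℤ)) {x : Fin d → ℤ} (hx : x ∈ B) :
    1 ≤ green B x x := by
  rw [green_eq B hx hx]
  have h := Summable.le_tsum (summable_pow_entry B hd ⟨x, hx⟩ ⟨x, hx⟩) 0
    (fun k _ => pow_entry_nonneg B k _ _)
  have h0 : ((killedKernel B) ^ 0) (⟨x, hx⟩ : B) ⟨x, hx⟩ = 1 := by
    rw [pow_zero, Matrix.one_apply_eq]
  rw [h0] at h
  exact h


lemma key_identity (hd : 1 ≤ d) (B : Finset (Fin d → ℤ)) {x y z : Fin d → ℤ}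
    (hx : x ∈ B) (hy : y ∈ B.erase x) (hz : z ∈ B.erase x) :
    green B x x * green (B.erase x) y z
      = green B y z * green B x x - green B y x * green B x z := by
  classical
  set S := B.erase x with hSdef
  set c := green B x x with hcdef
  set H : (Fin d → ℤ) → (Fin d → ℤ) → ℝ :=
    fun w z' => green B w z' * c - green B w x * green B x z' with hHdef
  have hSB : ∀ w ∈ S, w ∈ B := fun w hw => Finset.mem_of_mem_erase hw
  have hSne : ∀ w ∈ S, w ≠ x := fun w hw => Finset.ne_of_mem_erase hw
  -- Step A : for y' z' ∈ S, ∑_{w ∈ S} (δ(y',w) - K y' w) * H w z' = c * δ(y',z')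
  have stepA : ∀ y' ∈ S, ∀ z' ∈ S,
      ∑ w ∈ S, ((if y' = w then (1:ℝ) else 0) - K y' w) * H w z'
        = c * (if y' = z' then (1:ℝ) else 0) := by
    intro y' hy' z' hz'
    have hy'B := hSB y' hy'
    have hz'B := hSB z' hz'
    have hHx : H x z' = 0 := by simp only [hHdef]; ring
    have hext : ∑ w ∈ S, ((if y' = w then (1:ℝ) else 0) - K y' w) * H w z'
        = ∑ w ∈ B, ((if y' = w then (1:ℝ) else 0) - K y' w) * H w z' := by
      rw [hSdef]
      have := Finset.sum_erase_add B
        (fun w => ((if y' = w then (1:ℝ) else 0) - K y' w) * H w z') hx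
      rw [← this, hHx, mul_zero, add_zero]
    rw [hext]
    have hsplit : ∑ w ∈ B, ((if y' = w then (1:ℝ) else 0) - K y' w) * H w z'
        = (∑ w ∈ B, ((if y' = w then (1:ℝ) else 0) - K y' w) * green B w z') * c
          - (∑ w ∈ B, ((if y' = w then (1:ℝ) else 0) - K y' w) * green B w x) * green B x z' := by
      rw [Finset.sum_mul, Finset.sum_mul, ← Finset.sum_sub_distrib]
      refine Finset.sum_congr rfl fun w _ => ?_
      simp only [hHdef]
      ring
    rw [hsplit, mulGreen_ambient hd B hy'B hz'B, mulGreen_ambient hd B hy'B hx]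
    have hyx : (if y' = x then (1:ℝ) else 0) = 0 := if_neg (hSne y' hy')
    rw [hyx]
    ring
  -- Step B : c * green S y z = H y z
  have hyS := hy
  have hzS := hz
  rw [hSdef] at hyS hzS
  have stepB : c * green S y z = H y z := by
    have hdouble : ∑ v ∈ S, (∑ w ∈ S, green S y w * ((if w = v then (1:ℝ) else 0) - K w v)) * H v z
        = ∑ w ∈ S, green S y w * (∑ v ∈ S, ((if w = v then (1:ℝ) else 0) - K w v) * H v z) := by
      calc ∑ v ∈ S, (∑ w ∈ S, green S y w * ((if w = v then (1:ℝ) else 0) - K w v)) * H v z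
          = ∑ v ∈ S, ∑ w ∈ S, green S y w * (((if w = v then (1:ℝ) else 0) - K w v) * H v z) := by
            refine Finset.sum_congr rfl fun v _ => ?_
            rw [Finset.sum_mul]
            exact Finset.sum_congr rfl fun w _ => by ring
        _ = ∑ w ∈ S, ∑ v ∈ S, green S y w * (((if w = v then (1:ℝ) else 0) - K w v) * H v z) :=
            Finset.sum_comm
        _ = ∑ w ∈ S, green S y w * ∑ v ∈ S, ((if w = v then (1:ℝ) else 0) - K w v) * H v z := by
            exact Finset.sum_congr rfl fun w _ => (Finset.mul_sum _ _ _).symm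
    have lhs_eq : ∑ v ∈ S, (∑ w ∈ S, green S y w * ((if w = v then (1:ℝ) else 0) - K w v)) * H v z
        = H y z := by
      have h1 : ∀ v ∈ S, (∑ w ∈ S, green S y w * ((if w = v then (1:ℝ) else 0) - K w v)) * H v z
          = (if y = v then (1:ℝ) else 0) * H v z := by
        intro v hv
        rw [greenMul_ambient hd S hy hv]
      rw [Finset.sum_congr rfl h1]
      have h2 : ∀ v ∈ S, (if y = v then (1:ℝ) else 0) * H v z
          = if y = v then H v z else 0 := by
        intro v _; split <;> simp
      rw [Finset.sum_congr rfl h2, Finset.sum_ite_eq S y (fun v => H v z), if_pos hy]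
    have rhs_eq : ∑ w ∈ S, green S y w * (∑ v ∈ S, ((if w = v then (1:ℝ) else 0) - K w v) * H v z)
        = c * green S y z := by
      have h1 : ∀ w ∈ S, green S y w * (∑ v ∈ S, ((if w = v then (1:ℝ) else 0) - K w v) * H v z)
          = green S y w * (c * (if w = z then (1:ℝ) else 0)) := by
        intro w hw
        rw [stepA w hw z hz]
      rw [Finset.sum_congr rfl h1]
      have h2 : ∀ w ∈ S, green S y w * (c * (if w = z then (1:ℝ) else 0))
          = if w = z then c * green S y w else 0 := by
        intro w _; split <;> simp; ring
      rw [Finset.sum_congr rfl h2, Finset.sum_ite_eq' S z (fun w => c * green S y w), if_pos hz]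
    rw [← rhs_eq, ← hdouble, lhs_eq]
  have := stepB
  simp only [hHdef] at this
  rw [hcdef] at this ⊢
  linarith [this]

end GreenAux

/-- the two-point exchange identity: for any finite `B ⊂ ℤ^d` and any
`x ≠ x'` in `B`, `G_B(x,x) · G_{B∖{x}}(x',x') = G_B(x',x') · G_{B∖{x'}}(x,x)`. -/
theorem green_exchange (d : ℕ) (hd : 1 ≤ d) (B : Finset (Fin d → ℤ))
    (x x' : Fin d → ℤ) (hx : x ∈ B) (hx' : x' ∈ B) (hne : x ≠ x') :
    green B x x * green (B.erase x) x' x' = green B x' x' * green (B.erase x') x x := by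
  have hx'e : x' ∈ B.erase x := Finset.mem_erase.2 ⟨fun h => hne h.symm, hx'⟩
  have hxe : x ∈ B.erase x' := Finset.mem_erase.2 ⟨hne, hx⟩
  have h1 := GreenAux.key_identity hd B hx hx'e hx'e
  have h2 := GreenAux.key_identity hd B hx' hxe hxe
  have hsym : green B x' x = green B x x' := GreenAux.green_symm B x' x
  rw [h1, h2, hsym]
  ring
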